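/- An n-tuple (P_1,…,P_n) of elements of K⟨n⟩ is a cyclic gradient, i.e. there exists P ∈ K⟨n⟩ with δ_j P = P_j for all 1 ≤ j ≤ n, if and only if Σ_{j=1}^n X_j P_j lies in the cyclic subspace CK⟨n⟩. -/

import Mathlib

/-! Setup: the free associative algebra `K⟨X_1,…,X_n⟩` realized as the monoid
algebra of the free monoid on `Fin n`, together with the partial cyclic
derivatives `δ_j`, the number operator `N` and the cyclic symmetrization `C`. -/

noncomputable section
set_option linter.unusedSectionVars false

/-- `K⟨n⟩`, the ring of polynomials in `n` noncommuting indeterminates. -/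
abbrev FreePoly (K : Type) [CommSemiring K] (n : ℕ) : Type :=
  MonoidAlgebra K (FreeMonoid (Fin n))

/-- The monomial `X_{i_1} ⋯ X_{i_p}` associated to the word `w = [i_1,…,i_p]`. -/
def mono (K : Type) [Field K] {n : ℕ} (w : List (Fin n)) : FreePoly K n :=
  MonoidAlgebra.single (FreeMonoid.ofList w) 1

/-- The indeterminate `X k`. -/
def Xvar (K : Type) [Field K] {n : ℕ} (k : Fin n) : FreePoly K n := mono K [k]

variable {K : Type} [Field K] [CharZero K] {n : ℕ}

/-- The partial cyclic derivative `δ_j = μ̃ ∘ ∂_j`: on a monomial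
`X_{i_0} ⋯ X_{i_s}` it gives `∑_{p : i_p = j} X_{i_{p+1}} ⋯ X_{i_s} X_{i_0} ⋯ X_{i_{p-1}}`. -/
def cycDeriv (j : Fin n) : FreePoly K n →ₗ[K] FreePoly K n :=
  (Finsupp.lsum K fun w => LinearMap.toSpanSingleton K _
    (∑ p : Fin (FreeMonoid.toList w).length,
      if (FreeMonoid.toList w).get p = j then
        mono K ((FreeMonoid.toList w).drop (p + 1) ++ (FreeMonoid.toList w).take p)
      else 0)) ∘ₗ (MonoidAlgebra.coeffLinearEquiv K).toLinearMap

/-- The number operator `N`, multiplying a monomial by its degree. -/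
def numOp : FreePoly K n →ₗ[K] FreePoly K n :=
  (Finsupp.lsum K fun w => LinearMap.toSpanSingleton K _
    ((FreeMonoid.toList w).length • mono K (FreeMonoid.toList w))) ∘ₗ
    (MonoidAlgebra.coeffLinearEquiv K).toLinearMap

/-- The cyclic symmetrization `C`, sending a monomial of degree `p ≥ 1` to the
sum of its `p` cyclic rotations (and `1` to `0`). -/
def cycSym : FreePoly K n →ₗ[K] FreePoly K n :=
  (Finsupp.lsum K fun w => LinearMap.toSpanSingleton K _
    (∑ p ∈ Finset.range (FreeMonoid.toList w).length,
      mono K ((FreeMonoid.toList w).rotate (p + 1)))) ∘ₗ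
    (MonoidAlgebra.coeffLinearEquiv K).toLinearMap

/-- Auxiliary: the left derivative on a word. -/
def lderivAux (K : Type) [Field K] {n : ℕ} (j : Fin n) : List (Fin n) → FreePoly K n
  | [] => 0
  | k :: t => if k = j then mono K t else 0

/-- The left derivative `L_j`: picks out monomials starting with `X_j` and strips `X_j`. -/
def leftDeriv (j : Fin n) : FreePoly K n →ₗ[K] FreePoly K n :=
  (Finsupp.lsum K fun w => LinearMap.toSpanSingleton K _ (lderivAux K j (FreeMonoid.toList w))) ∘ₗ
    (MonoidAlgebra.coeffLinearEquiv K).toLinearMap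

lemma lhom_ext_single {N : Type} [AddCommMonoid N] [Module K N]
    ⦃φ ψ : FreePoly K n →ₗ[K] N⦄
    (h : ∀ (a : FreeMonoid (Fin n)) (b : K), φ (MonoidAlgebra.single a b) = ψ (MonoidAlgebra.single a b)) :
    φ = ψ :=
  MonoidAlgebra.lhom_ext' fun a => LinearMap.ext fun b => h a b

lemma mono_mul (u v : List (Fin n)) : mono K u * mono K v = mono K (u ++ v) := by
  simp [mono, MonoidAlgebra.single_mul_single]

lemma single_eq_smul_mono (a : FreeMonoid (Fin n)) (b : K) :
    (MonoidAlgebra.single a b : FreePoly K n) = b • mono K (FreeMonoid.toList a) := by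
  simp [mono, MonoidAlgebra.smul_single]

lemma cycDeriv_mono (j : Fin n) (w : List (Fin n)) :
    cycDeriv j (mono K w) = ∑ p : Fin w.length,
      if w.get p = j then mono K (w.drop (p + 1) ++ w.take p) else 0 := by
  rw [cycDeriv, mono]
  simp [MonoidAlgebra.coeff_single]
  rfl

lemma cycSym_mono (w : List (Fin n)) :
    cycSym (mono K w) = ∑ p ∈ Finset.range w.length, mono K (w.rotate (p + 1)) := by
  rw [cycSym, mono]
  simp [MonoidAlgebra.coeff_single]

lemma leftDeriv_mono (j : Fin n) (w : List (Fin n)) :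
    leftDeriv j (mono K w) = lderivAux K j w := by
  rw [leftDeriv, mono]
  simp [MonoidAlgebra.coeff_single]

lemma rotate_eq_cons (w : List (Fin n)) (p : Fin w.length) :
    w.rotate p = w.get p :: (w.drop (p + 1) ++ w.take p) := by
  rw [List.rotate_eq_drop_append_take (le_of_lt p.isLt)]
  conv_lhs => rw [List.drop_eq_getElem_cons p.isLt]
  simp only [List.cons_append, List.get_eq_getElem]

lemma cycSym_mono' (w : List (Fin n)) :
    cycSym (mono K w) = ∑ p : Fin w.length, mono K (w.rotate p) := by
  rw [cycSym_mono, Fin.sum_univ_eq_sum_range (fun p => mono K (w.rotate p))]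
  set f : ℕ → FreePoly K n := fun p => mono K (w.rotate p) with hf
  have h1 : ∑ p ∈ Finset.range w.length, f (p + 1) + f 0
      = ∑ p ∈ Finset.range w.length, f p + f w.length := by
    rw [← Finset.sum_range_succ, ← Finset.sum_range_succ']
  have h2 : f w.length = f 0 := by simp [hf]
  rw [h2] at h1
  exact add_right_cancel h1

/-- Key identity A on monomials. -/
lemma sum_Xvar_mul_cycDeriv_mono (w : List (Fin n)) :
    ∑ j : Fin n, Xvar K j * cycDeriv j (mono K w) = cycSym (mono K w) := by
  rw [cycSym_mono']
  simp_rw [cycDeriv_mono, Finset.mul_sum]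
  rw [Finset.sum_comm]
  refine Finset.sum_congr rfl fun p _ => ?_
  rw [rotate_eq_cons]
  have hterm : ∀ j : Fin n, Xvar K j *
      (if w.get p = j then mono K (w.drop (p + 1) ++ w.take p) else 0)
      = if w.get p = j then mono K (w.get p :: (w.drop (p + 1) ++ w.take p)) else 0 := by
    intro j
    simp only [List.get_eq_getElem]
    by_cases h : w[(p : ℕ)] = j
    · rw [if_pos h, if_pos h, ← h, Xvar, mono_mul, List.singleton_append]
    · rw [if_neg h, if_neg h, mul_zero]
  simp_rw [hterm]
  rw [Finset.sum_ite_eq Finset.univ (w.get p)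
    (fun _ => mono K (w.get p :: (w.drop (p + 1) ++ w.take p)))]
  simp

/-- Key identity A : `∑ j, X_j · δ_j Q = C Q`. -/
lemma sum_Xvar_mul_cycDeriv (Q : FreePoly K n) :
    ∑ j : Fin n, Xvar K j * cycDeriv j Q = cycSym Q := by
  have hmap : (∑ j : Fin n, (LinearMap.mulLeft K (Xvar K j)).comp (cycDeriv j))
      = (cycSym (K := K) (n := n)) := by
    apply lhom_ext_single
    intro a b
    rw [single_eq_smul_mono, map_smul, map_smul]
    congr 1
    simpa using sum_Xvar_mul_cycDeriv_mono (K := K) (FreeMonoid.toList a)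
  have := LinearMap.congr_fun hmap Q
  simpa using this

lemma leftDeriv_Xvar_mul_mono (j k : Fin n) (w : List (Fin n)) :
    leftDeriv j (Xvar K k * mono K w) = if k = j then mono K w else 0 := by
  rw [Xvar, mono_mul, List.singleton_append, leftDeriv_mono]
  rfl

lemma leftDeriv_Xvar_mul (j k : Fin n) (F : FreePoly K n) :
    leftDeriv j (Xvar K k * F) = if k = j then F else 0 := by
  by_cases hk : k = j
  · subst hk
    have hmap : (leftDeriv k).comp (LinearMap.mulLeft K (Xvar K k))
        = (LinearMap.id : FreePoly K n →ₗ[K] FreePoly K n) := by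
      apply lhom_ext_single
      intro a b
      rw [single_eq_smul_mono, map_smul, map_smul]
      congr 1
      simpa using leftDeriv_Xvar_mul_mono (K := K) k k (FreeMonoid.toList a)
    simpa using LinearMap.congr_fun hmap F
  · have hmap : (leftDeriv j).comp (LinearMap.mulLeft K (Xvar K k))
        = (0 : FreePoly K n →ₗ[K] FreePoly K n) := by
      apply lhom_ext_single
      intro a b
      rw [single_eq_smul_mono, map_smul, map_smul]
      congr 1
      simpa [hk] using leftDeriv_Xvar_mul_mono (K := K) j k (FreeMonoid.toList a)
    simpa [hk] using LinearMap.congr_fun hmap F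

lemma leftDeriv_cycSym_mono (j : Fin n) (w : List (Fin n)) :
    leftDeriv j (cycSym (mono K w)) = cycDeriv j (mono K w) := by
  rw [cycSym_mono', map_sum, cycDeriv_mono]
  refine Finset.sum_congr rfl fun p _ => ?_
  rw [rotate_eq_cons, leftDeriv_mono]
  rfl

lemma leftDeriv_cycSym (j : Fin n) (R : FreePoly K n) :
    leftDeriv j (cycSym R) = cycDeriv j R := by
  have hmap : (leftDeriv j).comp (cycSym (K := K) (n := n)) = cycDeriv j := by
    apply lhom_ext_single
    intro a b
    rw [single_eq_smul_mono, map_smul, map_smul]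
    congr 1
    simpa using leftDeriv_cycSym_mono (K := K) j (FreeMonoid.toList a)
  simpa using LinearMap.congr_fun hmap R

theorem isCyclicGradient_iff_mem_cyclicSubspace (P : Fin n → FreePoly K n) :
    (∃ Q : FreePoly K n, ∀ j : Fin n, cycDeriv j Q = P j) ↔
      (∑ j : Fin n, Xvar K j * P j) ∈
        LinearMap.range (cycSym (K := K) (n := n)) := by
  constructor
  · rintro ⟨Q, hQ⟩
    refine ⟨Q, ?_⟩
    rw [← sum_Xvar_mul_cycDeriv Q]
    exact Finset.sum_congr rfl fun j _ => by rw [hQ j]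
  · rintro ⟨R, hR⟩
    refine ⟨R, fun j => ?_⟩
    calc cycDeriv j R = leftDeriv j (cycSym R) := (leftDeriv_cycSym j R).symm
      _ = leftDeriv j (∑ k : Fin n, Xvar K k * P k) := by rw [hR]
      _ = ∑ k : Fin n, if k = j then P k else 0 := by
          rw [map_sum]
          exact Finset.sum_congr rfl fun k _ => leftDeriv_Xvar_mul j k (P k)
      _ = P j := by simp
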